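/- Let C be a linear code over Z_{p^s} and v ∈ C a codeword of (additive) order greater than p^2. Then φ_L(v) is not in the kernel K(φ_L(C)) of the Gray image: either φ_L(v) + φ_L(C) ≠ φ_L(C) or φ_L(-v) + φ_L(C) ≠ φ_L(C). -/

import Mathlib

/-- The extended Lee weight on `ZMod (p^s)`. -/
def leeWt (p s : ℕ) (x : ZMod (p ^ s)) : ℕ :=
  if x.val ≤ p ^ s - p ^ (s - 1) then min x.val (p ^ (s - 1)) else p ^ s - x.val

/-- The Gray map `φ_L : ZMod (p^s) → (F_p)^(p^(s-1))`:
`x = q·p^(s-1) + r` maps to the vector with `q+1` in the first `r` coordinates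
and `q` in the rest. -/
def gray (p s : ℕ) (x : ZMod (p ^ s)) : Fin (p ^ (s - 1)) → ZMod p :=
  fun i =>
    if i.val < x.val % p ^ (s - 1) then ((x.val / p ^ (s - 1) + 1 : ℕ) : ZMod p)
    else ((x.val / p ^ (s - 1) : ℕ) : ZMod p)

/-- The Gray map extended coordinatewise to vectors. -/
def grayV (p s n : ℕ) (v : Fin n → ZMod (p ^ s)) : Fin n → Fin (p ^ (s - 1)) → ZMod p :=
  fun i => gray p s (v i)

lemma gray_key (p s : ℕ) (hp : p.Prime) (hs : 3 ≤ s) (x y : ZMod (p ^ s))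
    (h : gray p s (-x) + gray p s x = gray p s y) : p ^ (s - 2) ∣ x.val := by
  haveI : Fact p.Prime := ⟨hp⟩
  haveI : NeZero (p ^ s) := ⟨pow_ne_zero _ hp.pos.ne'⟩
  set N := p ^ (s - 1) with hN
  have hp1 : 1 < p := hp.one_lt
  have hN0 : 0 < N := pow_pos hp.pos _
  have hpsN : p ^ s = p * N := by
    rw [hN, ← pow_succ']
    congr 1; omega
  have haN : x.val < p * N := by rw [← hpsN]; exact x.val_lt
  set a := x.val with ha
  set q := a / N with hq
  set r := a % N with hr
  have hrN : r < N := Nat.mod_lt _ hN0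
  have hqp : q < p := Nat.div_lt_of_lt_mul (mul_comm p N ▸ haN)
  rcases Nat.eq_zero_or_pos r with hr0 | hrpos
  · exact (pow_dvd_pow p (by omega : s - 2 ≤ s - 1)).trans (Nat.dvd_of_mod_eq_zero hr0)
  have hx0 : x ≠ 0 := by
    intro h0
    rw [hr, ha, h0, ZMod.val_zero, Nat.zero_mod] at hrpos
    exact absurd hrpos (lt_irrefl 0)
  have hneg : (-x).val = p * N - a := by rw [ZMod.neg_val, if_neg hx0]; omega
  set k := p - 1 - q with hk
  have hkq : q + k + 1 = p := by omega
  have hdecomp : N * q + r = a := Nat.div_add_mod a N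
  have e1 : p * N = N * q + k * N + N := by
    have h2 : p = q + k + 1 := by omega
    rw [h2]; ring
  have hnegval : (-x).val = (N - r) + k * N := by rw [hneg]; omega
  have hmod : (-x).val % N = N - r := by
    rw [hnegval, Nat.add_mul_mod_self_right, Nat.mod_eq_of_lt (by omega)]
  have hdiv : (-x).val / N = k := by
    rw [hnegval, Nat.add_mul_div_right _ _ hN0, Nat.div_eq_of_lt (by omega), Nat.zero_add]
  have E : ∀ i : Fin N,
      (if (i : ℕ) < N - r then ((k + 1 : ℕ) : ZMod p) else ((k : ℕ) : ZMod p)) +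
      (if (i : ℕ) < r then ((q + 1 : ℕ) : ZMod p) else ((q : ℕ) : ZMod p)) = gray p s y i := by
    intro i
    have := congrFun h i
    simpa [gray, Pi.add_apply, hmod, hdiv, ← hr, ← hq, ← hN, ← ha] using this
  set c := y.val / N with hc
  set t := y.val % N with ht
  have htN : t < N := Nat.mod_lt _ hN0
  have grayy : ∀ i : Fin N, gray p s y i =
      if (i : ℕ) < t then ((c + 1 : ℕ) : ZMod p) else ((c : ℕ) : ZMod p) := by
    intro i; simp [gray, ← hc, ← ht, ← hN]
  have hsum1 : ((k + 1 : ℕ) : ZMod p) + ((q + 1 : ℕ) : ZMod p) = 1 := by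
    have e : ((k + 1 : ℕ) : ZMod p) + ((q + 1 : ℕ) : ZMod p) = ((q + k + 1 : ℕ) : ZMod p) + 1 := by
      push_cast; ring
    rw [e, hkq, ZMod.natCast_self, zero_add]
  have hsumA : ((k + 1 : ℕ) : ZMod p) + ((q : ℕ) : ZMod p) = 0 := by
    have e : ((k + 1 : ℕ) : ZMod p) + ((q : ℕ) : ZMod p) = ((q + k + 1 : ℕ) : ZMod p) := by
      push_cast; ring
    rw [e, hkq, ZMod.natCast_self]
  have hsumB : ((k : ℕ) : ZMod p) + ((q + 1 : ℕ) : ZMod p) = 0 := by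
    have e : ((k : ℕ) : ZMod p) + ((q + 1 : ℕ) : ZMod p) = ((q + k + 1 : ℕ) : ZMod p) := by
      push_cast; ring
    rw [e, hkq, ZMod.natCast_self]
  have eq0 := E ⟨0, hN0⟩
  rw [grayy] at eq0
  simp only [if_pos (show (0:ℕ) < N - r by omega), if_pos hrpos] at eq0
  rw [hsum1] at eq0
  have eqlast := E ⟨N - 1, by omega⟩
  rw [grayy] at eqlast
  simp only [if_neg (show ¬ (N - 1 : ℕ) < N - r by omega),
    if_neg (show ¬ (N - 1 : ℕ) < r by omega),
    if_neg (show ¬ (N - 1 : ℕ) < t by omega)] at eqlast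
  -- eqlast : ↑k + ↑q = ↑c
  have hd1 : ((c : ℕ) : ZMod p) + 1 = 0 := by
    rw [← eqlast]
    have e : ((k : ℕ) : ZMod p) + ((q : ℕ) : ZMod p) + 1 = ((q + k + 1 : ℕ) : ZMod p) := by
      push_cast; ring
    rw [e, hkq, ZMod.natCast_self]
  have ht0 : t = 0 := by
    rcases Nat.eq_zero_or_pos t with h0 | htpos
    · exact h0
    exfalso
    rw [if_pos htpos] at eq0
    have e : ((c + 1 : ℕ) : ZMod p) = ((c : ℕ) : ZMod p) + 1 := by push_cast; ring
    rw [e] at eq0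
    have hcz : ((c : ℕ) : ZMod p) = 0 := by
      have := eq0.symm
      rwa [add_eq_right] at this
    rw [hcz, zero_add] at hd1
    exact one_ne_zero hd1
  rw [if_neg (by omega : ¬ (0:ℕ) < t)] at eq0
  have hc1 : ((c : ℕ) : ZMod p) = 1 := eq0.symm
  have hp2 : p = 2 := by
    have h2 : ((2 : ℕ) : ZMod p) = 0 := by
      rw [hc1] at hd1
      have : ((2 : ℕ) : ZMod p) = (1 : ZMod p) + 1 := by push_cast; ring
      rw [this, hd1]
    have := (ZMod.natCast_eq_zero_iff 2 p).mp h2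
    exact ((Nat.prime_dvd_prime_iff_eq hp Nat.prime_two).mp this)
  have hreq : r = N - r := by
    by_contra hne
    rcases Nat.lt_or_ge r (N - r) with hlt | hge
    · have eb := E ⟨r, hrN⟩
      rw [grayy] at eb
      simp only [if_pos hlt, if_neg (lt_irrefl r), if_neg (show ¬ r < t by omega)] at eb
      rw [hsumA, hc1] at eb
      exact one_ne_zero eb.symm
    · have hlt2 : N - r < r := by omega
      have eb := E ⟨N - r, by omega⟩
      rw [grayy] at eb
      simp only [if_neg (lt_irrefl (N - r)), if_pos hlt2,
        if_neg (show ¬ N - r < t by omega)] at eb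
      rw [hsumB, hc1] at eb
      exact one_ne_zero eb.symm
  have hN2 : N = 2 * 2 ^ (s - 2) := by
    rw [hN, hp2, ← pow_succ']
    congr 1; omega
  have hr2 : r = 2 ^ (s - 2) := by omega
  refine ⟨2 * q + 1, ?_⟩
  rw [hp2, ← hdecomp, hN2, hr2]; ring

/-- If `v ∈ C` has additive order greater than `p^2`, then `φ_L(v)` does not lie
in the kernel of the Gray image: either `φ_L(v) + φ_L(C) ≠ φ_L(C)` or
`φ_L(-v) + φ_L(C) ≠ φ_L(C)`. -/
theorem grayV_not_mem_kernel_of_order_gt (p s n : ℕ) (hp : p.Prime) (hs : 3 ≤ s)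
    (C : Submodule (ZMod (p ^ s)) (Fin n → ZMod (p ^ s)))
    (v : Fin n → ZMod (p ^ s)) (hv : v ∈ C) (hord : p ^ 2 < addOrderOf v) :
    (fun z => grayV p s n v + z) '' (grayV p s n '' C) ≠ grayV p s n '' C ∨
    (fun z => grayV p s n (-v) + z) '' (grayV p s n '' C) ≠ grayV p s n '' C := by
  by_contra hcon
  push_neg at hcon
  obtain ⟨_h1, h2⟩ := hcon
  have hvmem : grayV p s n v ∈ grayV p s n '' (C : Set (Fin n → ZMod (p ^ s))) := ⟨v, hv, rfl⟩
  have hmem : grayV p s n (-v) + grayV p s n v ∈ grayV p s n '' (C : Set (Fin n → ZMod (p ^ s))) := by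
    rw [← h2]
    exact ⟨grayV p s n v, hvmem, rfl⟩
  obtain ⟨u, _hu, huv⟩ := hmem
  have hdvd : ∀ i, p ^ (s - 2) ∣ (v i).val := by
    intro i
    apply gray_key p s hp hs (v i) (u i)
    have h3 := congrFun huv.symm i
    simpa [grayV, Pi.add_apply, Pi.neg_apply] using h3
  have hzero : (p ^ 2) • v = 0 := by
    funext i
    obtain ⟨m, hm⟩ := hdvd i
    haveI : NeZero (p ^ s) := ⟨pow_ne_zero _ hp.pos.ne'⟩
    have hval : (((v i).val : ℕ) : ZMod (p ^ s)) = v i := by rw [ZMod.natCast_val, ZMod.cast_id]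
    have h22 : 2 + (s - 2) = s := by omega
    rw [Pi.smul_apply, Pi.zero_apply, nsmul_eq_mul, ← hval, ← Nat.cast_mul,
      hm, ← mul_assoc, ← pow_add, h22, Nat.cast_mul, ZMod.natCast_self, zero_mul]
  have hord2 : addOrderOf v ∣ p ^ 2 := addOrderOf_dvd_of_nsmul_eq_zero hzero
  have : addOrderOf v ≤ p ^ 2 := Nat.le_of_dvd (pow_pos hp.pos 2) hord2
  omega
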